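/- arXiv:1208.1291 — 5 statements merged into one kernel-verified Lean document; each statement's English description precedes it below -/
import Mathlib

section
/- For a kG-module homomorphism ρ : M → N, if ρ factors in Mod(kG) through the surjection π_N : N↑G → N, then there exists a k-linear map θ : M → N with Tr_G(θ) = ρ. -/
open Finset

universe u

section Prelude

variable {k G : Type u} [CommRing k] [Group G] [Fintype G]
variable {M N : Type u} [AddCommGroup M] [Module k M] [AddCommGroup N] [Module k N]

/-- The trace map `Tr_G(θ)(m) = ∑ g, g • θ(g⁻¹ • m)`. -/
noncomputable def traceMap (ρM : Representation k G M) (ρN : Representation k G N)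
    (θ : M →ₗ[k] N) : M →ₗ[k] N :=
  ∑ g : G, (ρN g) ∘ₗ θ ∘ₗ (ρM g⁻¹)

/-- `f` is a `kG`-module homomorphism, i.e. a `G`-equivariant `k`-linear map. -/
def IsGEquiv (ρM : Representation k G M) (ρN : Representation k G N)
    (f : M →ₗ[k] N) : Prop :=
  ∀ g : G, f ∘ₗ (ρM g) = (ρN g) ∘ₗ f

/-- The induced module `M↑G = kG ⊗ₖ M`, modelled as `G →₀ M`, where `h • (g ⊗ m) = hg ⊗ m`. -/
noncomputable def ind (k G M : Type u) [CommRing k] [Group G] [AddCommGroup M] [Module k M] :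
    Representation k G (G →₀ M) where
  toFun h := Finsupp.lmapDomain M k (fun x => h * x)
  map_one' := by
    refine LinearMap.ext fun f => ?_
    show Finsupp.mapDomain (fun x => (1:G) * x) f = f
    simp only [one_mul]
    exact Finsupp.mapDomain_id
  map_mul' h₁ h₂ := by
    refine LinearMap.ext fun f => ?_
    simp only [Finsupp.lmapDomain_apply, Module.End.mul_apply]
    rw [show (fun x => h₁ * h₂ * x) = (fun x => h₁ * x) ∘ (fun x => h₂ * x) by
      funext x; simp [mul_assoc]]
    exact Finsupp.mapDomain_comp

/-- The natural map `ι_M : M → M↑G`, `m ↦ ∑ g, g ⊗ g⁻¹m`. -/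
noncomputable def indI (ρM : Representation k G M) : M →ₗ[k] (G →₀ M) :=
  ∑ g : G, (Finsupp.lsingle g) ∘ₗ (ρM g⁻¹)

/-- The natural map `π_M : M↑G → M`, `g ⊗ m ↦ g·m`. -/
noncomputable def indP (ρM : Representation k G M) : (G →₀ M) →ₗ[k] M :=
  Finsupp.lsum k fun g => (ρM g : M →ₗ[k] M)

end Prelude

/-- if a `kG`-homomorphism `ρ : M → N` factors through `π_N : N↑G → N`,
then `ρ = Tr_G(θ)` for some `k`-linear `θ`. -/
theorem exists_trace_of_factors_through_indP
    {k G : Type u} [CommRing k] [Group G] [Fintype G]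
    {M N : Type u} [AddCommGroup M] [Module k M] [AddCommGroup N] [Module k N]
    (ρM : Representation k G M) (ρN : Representation k G N)
    (ρ : M →ₗ[k] N) (hρ : IsGEquiv ρM ρN ρ)
    (ρ' : M →ₗ[k] (G →₀ N)) (hρ' : IsGEquiv ρM (ind k G N) ρ')
    (hfac : (indP ρN) ∘ₗ ρ' = ρ) :
    ∃ θ : M →ₗ[k] N, traceMap ρM ρN θ = ρ := by
  refine ⟨(Finsupp.lapply (1 : G)) ∘ₗ ρ', ?_⟩
  ext m
  have h1 : ∀ g : G, (ρ' (ρM g⁻¹ m)) (1 : G) = (ρ' m) g := by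
    intro g
    have h := congrFun (congrArg (DFunLike.coe) (hρ' g⁻¹)) m
    simp only [LinearMap.coe_comp, Function.comp_apply] at h
    rw [h]
    show (Finsupp.mapDomain (fun x => g⁻¹ * x) (ρ' m)) (1 : G) = (ρ' m) g
    have : (1 : G) = g⁻¹ * g := by simp
    rw [this, Finsupp.mapDomain_apply (mul_right_injective g⁻¹)]
  have h2 : traceMap ρM ρN ((Finsupp.lapply (1 : G)) ∘ₗ ρ') m
      = ∑ g : G, ρN g ((ρ' m) g) := by
    simp only [traceMap, LinearMap.sum_apply, LinearMap.coe_comp, Function.comp_apply,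
      Finsupp.lapply_apply]
    exact Finset.sum_congr rfl fun g _ => by rw [h1 g]
  rw [h2, ← congrFun (congrArg (DFunLike.coe) hfac) m]
  show _ = Finsupp.lsum k (fun g => (ρN g : N →ₗ[k] N)) (ρ' m)
  rw [Finsupp.lsum_apply]
  rw [Finsupp.sum_fintype]
  intro g; simp
end

section
/- A kG-module P is weakly projective (i.e., Hom_{kG}(P,−) preserves exactness of k-split short exact sequences) if and only if there exists θ ∈ End_k(P) with Tr_G(θ) = id_P (Higman's criterion). -/
open Finset

universe u

section WeakDefs

variable {k G : Type u} [CommRing k] [Group G] [Fintype G]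

/-- A `kG`-module `P` is weakly projective if every `kG`-homomorphism out of `P`
lifts along any `k`-split epimorphism of `kG`-modules. -/
def WeaklyProjective {P : Type u} [AddCommGroup P] [Module k P]
    (ρP : Representation k G P) : Prop :=
  ∀ (M N : Type u) [AddCommGroup M] [Module k M] [AddCommGroup N] [Module k N]
    (ρM : Representation k G M) (ρN : Representation k G N) (π : M →ₗ[k] N),
    IsGEquiv ρM ρN π → (∃ s : N →ₗ[k] M, π ∘ₗ s = LinearMap.id) →
    ∀ f : P →ₗ[k] N, IsGEquiv ρP ρN f →
      ∃ fl : P →ₗ[k] M, IsGEquiv ρP ρM fl ∧ π ∘ₗ fl = f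

/-- A `kG`-module `P` is weakly injective if every `kG`-homomorphism into `P`
extends along any `k`-split monomorphism of `kG`-modules. -/
def WeaklyInjective {P : Type u} [AddCommGroup P] [Module k P]
    (ρP : Representation k G P) : Prop :=
  ∀ (L M : Type u) [AddCommGroup L] [Module k L] [AddCommGroup M] [Module k M]
    (ρL : Representation k G L) (ρM : Representation k G M) (ι : L →ₗ[k] M),
    IsGEquiv ρL ρM ι → (∃ r : M →ₗ[k] L, r ∘ₗ ι = LinearMap.id) →
    ∀ f : L →ₗ[k] P, IsGEquiv ρL ρP f →
      ∃ fe : M →ₗ[k] P, IsGEquiv ρM ρP fe ∧ fe ∘ₗ ι = f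

end WeakDefs


section Aux

variable {k G : Type u} [CommRing k] [Group G] [Fintype G]
variable {M N : Type u} [AddCommGroup M] [Module k M] [AddCommGroup N] [Module k N]

lemma traceMap_apply (ρM : Representation k G M) (ρN : Representation k G N)
    (θ : M →ₗ[k] N) (m : M) :
    traceMap ρM ρN θ m = ∑ g : G, ρN g (θ (ρM g⁻¹ m)) := by
  simp [traceMap]

omit [Fintype G] in
lemma isGEquiv_apply {ρM : Representation k G M} {ρN : Representation k G N}
    {f : M →ₗ[k] N} (hf : IsGEquiv ρM ρN f) (g : G) (m : M) :
    f (ρM g m) = ρN g (f m) :=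
  LinearMap.congr_fun (hf g) m

lemma traceMap_equivariant (ρM : Representation k G M) (ρN : Representation k G N)
    (θ : M →ₗ[k] N) : IsGEquiv ρM ρN (traceMap ρM ρN θ) := by
  intro h
  refine LinearMap.ext fun m => ?_
  simp only [LinearMap.comp_apply, traceMap_apply, map_sum]
  rw [← Fintype.sum_bijective (fun g => h * g) (Group.mulLeft_bijective h) _ _ (fun g => rfl)]
  refine Finset.sum_congr rfl fun g _ => ?_
  have h1 : ρM (h * g)⁻¹ (ρM h m) = ρM g⁻¹ m := by
    rw [← Module.End.mul_apply, ← map_mul]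
    simp [mul_inv_rev, mul_assoc]
  have h2 : (ρN (h * g) : N →ₗ[k] N) = (ρN h : N →ₗ[k] N) ∘ₗ (ρN g : N →ₗ[k] N) := by
    rw [map_mul]; rfl
  rw [h1, h2]
  rfl

end Aux

/-- Higman's criterion: `P` is weakly projective iff
`Tr_G(θ) = id_P` for some `θ ∈ End_k(P)`. -/
theorem weaklyProjective_iff_exists_trace_eq_id
    {k G : Type u} [CommRing k] [Group G] [Fintype G]
    {P : Type u} [AddCommGroup P] [Module k P] (ρP : Representation k G P) :
    WeaklyProjective ρP ↔ ∃ θ : P →ₗ[k] P, traceMap ρP ρP θ = LinearMap.id := by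
  constructor
  · intro hP
    -- use the induced module
    have hπ : IsGEquiv (ind k G P) ρP (indP ρP) := by
      intro g
      refine Finsupp.lhom_ext fun a b => ?_
      simp only [LinearMap.comp_apply, ind, MonoidHom.coe_mk, OneHom.coe_mk,
        Finsupp.lmapDomain_apply, Finsupp.mapDomain_single, indP, Finsupp.lsum_single]
      rw [← Module.End.mul_apply, ← map_mul]
    have hsec : ∃ s : P →ₗ[k] (G →₀ P), indP ρP ∘ₗ s = LinearMap.id := by
      refine ⟨Finsupp.lsingle 1, LinearMap.ext fun p => ?_⟩
      simp [indP]
    have hid : IsGEquiv ρP ρP (LinearMap.id (R := k) (M := P)) := by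
      intro g; rfl
    obtain ⟨fl, hfl, hfl2⟩ := hP (G →₀ P) P (ind k G P) ρP (indP ρP) hπ hsec LinearMap.id hid
    refine ⟨(Finsupp.lapply (1 : G)) ∘ₗ fl, LinearMap.ext fun p => ?_⟩
    rw [traceMap_apply]
    have key : ∀ g : G, (fl (ρP g⁻¹ p)) 1 = (fl p) g := by
      intro g
      have := isGEquiv_apply hfl g⁻¹ p
      rw [this]
      show (Finsupp.mapDomain (fun x => g⁻¹ * x) (fl p)) 1 = (fl p) g
      have h1 : (1 : G) = g⁻¹ * g := (inv_mul_cancel g).symm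
      rw [h1, Finsupp.mapDomain_apply (mul_right_injective g⁻¹)]
    simp only [LinearMap.comp_apply, Finsupp.lapply_apply, key]
    have : ∑ g : G, ρP g ((fl p) g) = indP ρP (fl p) := by
      rw [indP, Finsupp.lsum_apply]
      rw [Finsupp.sum_fintype]
      intro g; simp
    rw [this, ← LinearMap.comp_apply, hfl2]
  · rintro ⟨θ, hθ⟩
    intro M N _ _ _ _ ρM ρN π hπ ⟨s, hs⟩ f hf
    refine ⟨traceMap ρP ρM (s ∘ₗ f ∘ₗ θ), traceMap_equivariant _ _ _, ?_⟩
    refine LinearMap.ext fun p => ?_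
    simp only [LinearMap.comp_apply, traceMap_apply, map_sum]
    have : ∀ g : G, π (ρM g (s (f (θ (ρP g⁻¹ p))))) = f (ρP g (θ (ρP g⁻¹ p))) := by
      intro g
      rw [isGEquiv_apply hπ g, isGEquiv_apply hf g]
      congr 1
      exact LinearMap.congr_fun hs _
    rw [Finset.sum_congr rfl fun g _ => this g, ← map_sum, ← traceMap_apply, hθ]
    rfl
end

section
/- If M and N are kG-modules with diagonal G-action on M ⊗_k N, and M is weakly injective, then M ⊗_k N is weakly injective. -/
open Finset

universe u

section AuxLemmas

variable {k G : Type u} [CommRing k] [Group G] [Fintype G]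
variable {P : Type u} [AddCommGroup P] [Module k P]

lemma rep_mul_apply {M : Type u} [AddCommGroup M] [Module k M]
    (ρ : Representation k G M) (a b : G) (x : M) :
    ρ a (ρ b x) = ρ (a * b) x := by rw [map_mul]; rfl

lemma wi_of_trace (ρP : Representation k G P)
    (h : ∃ θ : P →ₗ[k] P, traceMap ρP ρP θ = LinearMap.id) :
    WeaklyInjective ρP := by
  obtain ⟨θ, hθ⟩ := h
  intro L M _ _ _ _ ρL ρM ι hι hr f hf
  obtain ⟨r, hr⟩ := hr
  refine ⟨∑ g : G, (ρP g) ∘ₗ θ ∘ₗ f ∘ₗ r ∘ₗ (ρM g⁻¹), ?_, ?_⟩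
  · intro h
    refine LinearMap.ext fun x => ?_
    simp only [LinearMap.comp_apply, LinearMap.coe_sum, Finset.sum_apply, map_sum]
    refine Fintype.sum_equiv (Equiv.mulLeft h⁻¹) _ _ fun g => ?_
    simp only [Equiv.coe_mulLeft]
    rw [rep_mul_apply ρM, rep_mul_apply ρP, show (h⁻¹ * g)⁻¹ = g⁻¹ * h by group,
      show h * (h⁻¹ * g) = g by group]
  · refine LinearMap.ext fun x => ?_
    have key : ∀ g : G, r (ρM g⁻¹ (ι x)) = ρL g⁻¹ x := by
      intro g
      have h1 : ι (ρL g⁻¹ x) = ρM g⁻¹ (ι x) := by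
        have := congrArg (fun F => F x) (hι g⁻¹)
        simpa using this
      rw [← h1]
      exact congrArg (fun F => F (ρL g⁻¹ x)) hr
    simp only [LinearMap.comp_apply, LinearMap.coe_sum, Finset.sum_apply]
    have : ∀ g : G, f (ρL g⁻¹ x) = ρP g⁻¹ (f x) := by
      intro g
      have := congrArg (fun F => F x) (hf g⁻¹)
      simpa using this
    calc ∑ g : G, ρP g (θ (f (r (ρM g⁻¹ (ι x)))))
        = ∑ g : G, ρP g (θ (ρP g⁻¹ (f x))) := by
          refine Finset.sum_congr rfl fun g _ => ?_
          rw [key g, this g]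
      _ = traceMap ρP ρP θ (f x) := by
          simp [traceMap]
      _ = f x := by rw [hθ]; rfl

lemma ind_single (g a : G) (m : P) :
    (ind k G P) g (Finsupp.single a m) = Finsupp.single (g * a) m := by
  show Finsupp.mapDomain _ _ = _
  rw [Finsupp.mapDomain_single]

lemma indI_equiv (ρP : Representation k G P) :
    IsGEquiv ρP (ind k G P) (indI ρP) := by
  intro h
  refine LinearMap.ext fun x => ?_
  simp only [LinearMap.comp_apply, indI, LinearMap.coe_sum, Finset.sum_apply,
    Finsupp.lsingle_apply, map_sum, ind_single]
  refine Fintype.sum_equiv (Equiv.mulLeft h⁻¹) _ _ fun g => ?_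
  simp only [Equiv.coe_mulLeft]
  rw [rep_mul_apply ρP, show h * (h⁻¹ * g) = g by group, show (h⁻¹ * g)⁻¹ = g⁻¹ * h by group]

lemma trace_of_wi (ρP : Representation k G P) (hP : WeaklyInjective ρP) :
    ∃ θ : P →ₗ[k] P, traceMap ρP ρP θ = LinearMap.id := by
  have hret : (Finsupp.lapply (M := P) (R := k) 1) ∘ₗ indI ρP = LinearMap.id := by
    refine LinearMap.ext fun x => ?_
    simp only [LinearMap.comp_apply, indI, LinearMap.coe_sum, Finset.sum_apply,
      Finsupp.lsingle_apply, Finsupp.lapply_apply, LinearMap.id_coe, id_eq]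
    rw [Finsupp.finset_sum_apply, Finset.sum_eq_single (1:G)]
    · simp
    · intro g _ hg; simp [Finsupp.single_apply, hg]
    · intro hmem; exact absurd (Finset.mem_univ _) hmem
  obtain ⟨fe, hfe_eq, hfe_comp⟩ := hP P (G →₀ P) ρP (ind k G P) (indI ρP)
    (indI_equiv ρP) ⟨Finsupp.lapply 1, hret⟩ LinearMap.id (fun g => by simp)
  refine ⟨fe ∘ₗ Finsupp.lsingle 1, ?_⟩
  refine LinearMap.ext fun x => ?_
  have key : ∀ (g : G) (m : P), ρP g (fe (Finsupp.single 1 m)) = fe (Finsupp.single g m) := by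
    intro g m
    have h0 := congrArg (fun F => F (Finsupp.single (1:G) m)) (hfe_eq g)
    simp only [LinearMap.comp_apply] at h0
    rw [ind_single, mul_one] at h0
    exact h0.symm
  have hx : ∀ x : P, fe (indI ρP x) = x := fun x =>
    congrArg (fun F => F x) hfe_comp
  calc traceMap ρP ρP (fe ∘ₗ Finsupp.lsingle 1) x
      = ∑ g : G, ρP g (fe (Finsupp.single 1 (ρP g⁻¹ x))) := by
        simp [traceMap]
    _ = ∑ g : G, fe (Finsupp.single g (ρP g⁻¹ x)) := by
        exact Finset.sum_congr rfl fun g _ => key g _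
    _ = fe (indI ρP x) := by
        rw [indI]
        simp only [LinearMap.coe_sum, Finset.sum_apply, LinearMap.comp_apply,
          Finsupp.lsingle_apply, map_sum]
    _ = x := hx x

end AuxLemmas

open TensorProduct in
/-- if `M` is weakly injective then so is `M ⊗ₖ N` with diagonal action. -/
theorem weaklyInjective_tprod
    {k G : Type u} [CommRing k] [Group G] [Fintype G]
    {M N : Type u} [AddCommGroup M] [Module k M] [AddCommGroup N] [Module k N]
    (ρM : Representation k G M) (ρN : Representation k G N)
    (hM : WeaklyInjective ρM) :
    WeaklyInjective (ρM.tprod ρN) := by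
  obtain ⟨θ, hθ⟩ := trace_of_wi ρM hM
  refine wi_of_trace _ ⟨TensorProduct.map θ LinearMap.id, ?_⟩
  refine TensorProduct.ext' fun m n => ?_
  have h1 : traceMap (ρM.tprod ρN) (ρM.tprod ρN) (TensorProduct.map θ LinearMap.id) (m ⊗ₜ[k] n)
      = ∑ g : G, (ρM g (θ (ρM g⁻¹ m))) ⊗ₜ[k] (ρN g (ρN g⁻¹ n)) := by
    simp [traceMap, Representation.tprod_apply]
  rw [h1]
  have h2 : ∀ g : G, (ρM g (θ (ρM g⁻¹ m))) ⊗ₜ[k] (ρN g (ρN g⁻¹ n))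
      = (ρM g (θ (ρM g⁻¹ m))) ⊗ₜ[k] n := by
    intro g
    rw [rep_mul_apply ρN]
    simp
  rw [Finset.sum_congr rfl fun g _ => h2 g, ← TensorProduct.sum_tmul]
  have h3 : (∑ g : G, ρM g (θ (ρM g⁻¹ m))) = m := by
    have := congrArg (fun F => F m) hθ
    simpa [traceMap] using this
  rw [h3]
  rfl
end

section
/- Let G be a finite group and n > 1 an integer. Let Γ_n(ℤ) be the cokernel of the ℤG-map ℤ → ℤ↑G ⊕ ℤ_(n) sending m to (ι_ℤ(m), m), where ℤ_(n) is ℤ localized by inverting all integers coprime to n. Then Γ_n(ℤ) is weakly injective as a ℤG-module if and only if G is trivial. -/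
open Finset

universe u

section Gamma

variable (G : Type) [Group G] [Fintype G]

/-- The multiplicative set of integers coprime to `n`. -/
def coprimeSubmonoid (n : ℤ) : Submonoid ℤ where
  carrier := {x : ℤ | IsCoprime x n}
  one_mem' := isCoprime_one_left
  mul_mem' := fun ha hb => IsCoprime.mul_left ha hb

/-- `ℤ_(n)`: the localization of `ℤ` inverting all integers coprime to `n`. -/
abbrev Zloc (n : ℤ) := Localization (coprimeSubmonoid n)

/-- The `ℤG`-map `ℤ → ℤ↑G ⊕ ℤ_(n)`, `m ↦ (ι_ℤ(m), m)`. -/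
noncomputable def gammaMap (n : ℤ) : ℤ →ₗ[ℤ] (G →₀ ℤ) × Zloc n :=
  LinearMap.prod (indI (Representation.trivial ℤ (G := G) (V := ℤ)))
    (Algebra.linearMap ℤ (Zloc n))

/-- `Γ_n(ℤ)`: the cokernel of `ℤ → ℤ↑G ⊕ ℤ_(n)`. -/
noncomputable abbrev GammaMod (n : ℤ) :=
  ((G →₀ ℤ) × Zloc n) ⧸ LinearMap.range (gammaMap G n)

/-- The `G`-action on `ℤ↑G ⊕ ℤ_(n)`: the induced action on the first factor and the
trivial action on the second. -/
noncomputable def bigRep (n : ℤ) : Representation ℤ G ((G →₀ ℤ) × Zloc n) where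
  toFun g := ((ind ℤ G ℤ) g).prodMap LinearMap.id
  map_one' := by
    refine LinearMap.ext fun x => ?_
    simp
  map_mul' g h := by
    refine LinearMap.ext fun x => ?_
    simp

theorem ind_indI_trivial (g : G) (m : ℤ) :
    ((ind ℤ G ℤ) g) ((indI (Representation.trivial ℤ (G := G) (V := ℤ))) m)
      = (indI (Representation.trivial ℤ (G := G) (V := ℤ))) m := by
  classical
  have h : (indI (Representation.trivial ℤ (G := G) (V := ℤ))) m
      = ∑ g' : G, Finsupp.single g' m := by
    simp [indI, Representation.trivial_apply]
  rw [h]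
  show Finsupp.mapDomain (fun x => g * x) _ = _
  rw [Finsupp.mapDomain_finset_sum]
  exact Fintype.sum_equiv (Equiv.mulLeft g) _ _
    (fun x => by simp [Finsupp.mapDomain_single])

/-- The range of `gammaMap` is `G`-invariant. -/
theorem gammaMap_range_le (n : ℤ) (g : G) :
    LinearMap.range (gammaMap G n) ≤
      (LinearMap.range (gammaMap G n)).comap (bigRep G n g) := by
  rintro x ⟨m, rfl⟩
  refine Submodule.mem_comap.2 ⟨m, ?_⟩
  refine Prod.ext ?_ rfl
  exact (ind_indI_trivial G g m).symm

/-- The induced `G`-action on `Γ_n(ℤ)`. -/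
noncomputable def gammaRep (n : ℤ) : Representation ℤ G (GammaMod G n) where
  toFun g := Submodule.mapQ _ _ (bigRep G n g) (gammaMap_range_le G n g)
  map_one' := by
    refine LinearMap.ext fun x => ?_
    obtain ⟨y, rfl⟩ := Submodule.Quotient.mk_surjective _ x
    rw [Submodule.mapQ_apply, map_one]
    rfl
  map_mul' g h := by
    refine LinearMap.ext fun x => ?_
    obtain ⟨y, rfl⟩ := Submodule.Quotient.mk_surjective _ x
    try dsimp only
    rw [Module.End.mul_apply, Submodule.mapQ_apply, Submodule.mapQ_apply,
      Submodule.mapQ_apply, map_mul]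
    rfl

end Gamma


section AuxProofs

attribute [local instance 2000] Finsupp.module

variable {G : Type} [Group G] [Fintype G]

/-- Higman's criterion follows from weak injectivity. -/
theorem weaklyInjective_higman {P : Type} [AddCommGroup P] [Module ℤ P]
    (ρ : Representation ℤ G P) (h : WeaklyInjective ρ) :
    ∃ θ : P →ₗ[ℤ] P, traceMap ρ ρ θ = LinearMap.id := by
  classical
  have hequiv : IsGEquiv ρ (ind ℤ G P) (indI ρ) := by
    intro g
    refine LinearMap.ext fun m => ?_
    show (indI ρ) (ρ g m) = (ind ℤ G P g) ((indI ρ) m)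
    simp only [indI]
    simp only [LinearMap.sum_apply, LinearMap.coe_comp, Function.comp_apply,
      Finsupp.lsingle_apply, map_sum]
    refine Fintype.sum_equiv (Equiv.mulLeft g⁻¹) _ _ fun h' => ?_
    show Finsupp.single h' (ρ h'⁻¹ (ρ g m))
        = (ind ℤ G P g) (Finsupp.single (g⁻¹ * h') (ρ (g⁻¹ * h')⁻¹ m))
    show Finsupp.single h' (ρ h'⁻¹ (ρ g m))
        = Finsupp.mapDomain (fun x => g * x) (Finsupp.single (g⁻¹ * h') (ρ (g⁻¹ * h')⁻¹ m))
    rw [Finsupp.mapDomain_single, mul_inv_cancel_left, mul_inv_rev, inv_inv,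
      ← Module.End.mul_apply, ← map_mul]
  have hr : (Finsupp.lapply (1 : G) : (G →₀ P) →ₗ[ℤ] P) ∘ₗ indI ρ = LinearMap.id := by
    refine LinearMap.ext fun m => ?_
    rw [indI]
    simp only [LinearMap.coe_comp, Function.comp_apply, LinearMap.sum_apply,
      Finsupp.lsingle_apply, Finsupp.lapply_apply, LinearMap.id_coe, id_eq]
    rw [Finsupp.finset_sum_apply]
    simp only [Finsupp.single_apply]
    rw [Finset.sum_ite_eq' Finset.univ (1 : G) (fun h' => ρ h'⁻¹ m)]
    simp
  obtain ⟨fe, hfeEquiv, hfeSplit⟩ := @h P (G →₀ P) _ _ _ (Finsupp.module G P) ρ (ind ℤ G P) (indI ρ) hequiv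
    ⟨Finsupp.lapply (1 : G), hr⟩ LinearMap.id
    (fun g => by rw [LinearMap.id_comp, LinearMap.comp_id])
  refine ⟨fe ∘ₗ Finsupp.lsingle (1 : G), LinearMap.ext fun m => ?_⟩
  have h1 : traceMap ρ ρ (fe ∘ₗ Finsupp.lsingle (1 : G)) m
      = ∑ g : G, ρ g (fe (Finsupp.single (1 : G) (ρ g⁻¹ m))) := by
    rw [traceMap, LinearMap.sum_apply]
    simp only [LinearMap.coe_comp, Function.comp_apply, Finsupp.lsingle_apply]
  rw [h1]
  have h2 : ∀ g : G, ρ g (fe (Finsupp.single (1 : G) (ρ g⁻¹ m)))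
      = fe (Finsupp.single g (ρ g⁻¹ m)) := by
    intro g
    have := LinearMap.ext_iff.mp (hfeEquiv g) (Finsupp.single (1 : G) (ρ g⁻¹ m))
    simp only [LinearMap.coe_comp, Function.comp_apply] at this
    rw [← this]
    congr 1
    show Finsupp.mapDomain (fun x => g * x) (Finsupp.single (1 : G) (ρ g⁻¹ m)) = _
    rw [Finsupp.mapDomain_single, mul_one]
  simp only [h2]
  rw [← map_sum]
  have h3 : (∑ g : G, Finsupp.single g (ρ g⁻¹ m)) = indI ρ m := by
    rw [indI]
    simp only [LinearMap.sum_apply, LinearMap.coe_comp, Function.comp_apply,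
      Finsupp.lsingle_apply]
  rw [h3]
  have := LinearMap.ext_iff.mp hfeSplit m
  simpa using this

/-- Every `ℤ`-linear map from `ℤ_(n)` to `ℤ` vanishes when `n > 1`. -/
theorem hom_zloc_int {n : ℤ} (hn : 1 < n) (f : Zloc n →ₗ[ℤ] ℤ) : f = 0 := by
  refine LinearMap.ext fun x => ?_
  simp only [LinearMap.zero_apply]
  by_contra hfx
  set A : ℕ := (f x).natAbs with hA
  set s : ℤ := 1 + (A : ℤ) * n with hs
  have hsS : s ∈ coprimeSubmonoid n := ⟨1, -(A : ℤ), by rw [hs]; ring⟩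
  have hu : IsUnit (algebraMap ℤ (Zloc n) s) :=
    IsLocalization.map_units (Localization (coprimeSubmonoid n)) ⟨s, hsS⟩
  obtain ⟨u, hu'⟩ := hu
  have hx : x = s • ((↑u⁻¹ : Zloc n) * x) := by
    rw [zsmul_eq_mul, ← mul_assoc]
    have : ((s : ℤ) : Zloc n) = (u : Zloc n) := by
      rw [hu']; simp
    rw [this, Units.mul_inv, one_mul]
  have hdvd : s ∣ f x := by
    refine ⟨f ((↑u⁻¹ : Zloc n) * x), ?_⟩
    conv_lhs => rw [hx]
    rw [map_zsmul, zsmul_eq_mul, Int.cast_id]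
  have hApos : (0 : ℤ) ≤ (A : ℤ) := Int.natCast_nonneg A
  have h1 : (A : ℤ) < s := by nlinarith
  have hlt : (f x).natAbs < s.natAbs := by
    have := Int.natAbs_lt_natAbs_of_nonneg_of_lt hApos h1
    simpa [hA, Int.natAbs_abs] using this
  exact hfx (Int.eq_zero_of_dvd_of_natAbs_lt_natAbs hdvd hlt)

end AuxProofs

section GammaAux

variable (G : Type) [Group G] [Fintype G] (n : ℤ)

/-- The norm element `∑ g, g` of `ℤG`. -/
noncomputable def nuG : G →₀ ℤ := ∑ g : G, Finsupp.single g 1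

theorem nuG_one : (nuG G) 1 = 1 := by
  classical
  rw [nuG, Finsupp.finset_sum_apply]
  rw [Finset.sum_congr rfl (fun g _ => Finsupp.single_apply)]
  rw [Finset.sum_ite_eq' Finset.univ (1 : G) (fun _ => (1 : ℤ))]
  exact if_pos (Finset.mem_univ _)

theorem indI_triv (m : ℤ) :
    indI (Representation.trivial ℤ (G := G) (V := ℤ)) m = m • nuG G := by
  have h : (indI (Representation.trivial ℤ (G := G) (V := ℤ))) m
      = ∑ g' : G, Finsupp.single g' m := by
    simp [indI, Representation.trivial_apply]
  rw [h, nuG, Finset.smul_sum]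
  simp [Finsupp.smul_single]

theorem mk_gamma_zero (m : ℤ) :
    (Submodule.Quotient.mk (m • nuG G, algebraMap ℤ (Zloc n) m)
      : GammaMod G n) = 0 := by
  rw [Submodule.Quotient.mk_eq_zero]
  refine ⟨m, ?_⟩
  rw [gammaMap, LinearMap.prod_apply]
  simp only [Function.prod, Algebra.linearMap_apply]
  rw [indI_triv]
  rfl

/-- The augmentation map `ℤG → ℤ`. -/
noncomputable def epsG : (G →₀ ℤ) →ₗ[ℤ] ℤ :=
  Finsupp.lsum ℤ fun _ => LinearMap.id

theorem epsG_apply (x : G →₀ ℤ) : epsG G x = x.sum fun _ v => v :=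
  rfl

theorem epsG_single (g : G) (m : ℤ) : epsG G (Finsupp.single g m) = m := by
  simp [epsG]

theorem epsG_nuG : epsG G (nuG G) = (Fintype.card G : ℤ) := by
  rw [nuG, map_sum]
  simp [epsG_single, Finset.card_univ]

theorem epsG_mapDomain (φ : G → G) (x : G →₀ ℤ) :
    epsG G (Finsupp.mapDomain φ x) = epsG G x := by
  rw [epsG_apply, epsG_apply]
  exact Finsupp.sum_mapDomain_index (fun _ => rfl) (fun _ _ _ => rfl)

/-- Reduction of the augmentation mod `|G|`, defined on `Γ_n(ℤ)`. -/
noncomputable def pMapG : GammaMod G n →ₗ[ℤ] ZMod (Fintype.card G) :=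
  Submodule.liftQ _ ((Int.castAddHom (ZMod (Fintype.card G))).toIntLinearMap ∘ₗ
      epsG G ∘ₗ LinearMap.fst ℤ (G →₀ ℤ) (Zloc n)) (by
    rintro z ⟨m, rfl⟩
    simp only [LinearMap.mem_ker, LinearMap.coe_comp, Function.comp_apply]
    have h1 : (LinearMap.fst ℤ (G →₀ ℤ) (Zloc n)) (gammaMap G n m)
        = indI (Representation.trivial ℤ (G := G) (V := ℤ)) m := rfl
    rw [h1, indI_triv, map_smul, epsG_nuG]
    simp only [AddMonoidHom.coe_toIntLinearMap, Int.coe_castAddHom, smul_eq_mul]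
    push_cast
    rw [ZMod.natCast_self]
    ring)

theorem pMapG_mk (z : (G →₀ ℤ) × Zloc n) :
    pMapG G n (Submodule.Quotient.mk z) = ((epsG G z.1 : ℤ) : ZMod (Fintype.card G)) := by
  rw [pMapG]
  rw [Submodule.liftQ_apply]
  simp

/-- The projection of `Γ_n(ℤ)` onto the "free" part of `ℤG`. -/
noncomputable def qMapG : GammaMod G n →ₗ[ℤ] (G →₀ ℤ) :=
  Submodule.liftQ _ (LinearMap.fst ℤ (G →₀ ℤ) (Zloc n) -
      ((Finsupp.lapply (1 : G)) ∘ₗ LinearMap.fst ℤ (G →₀ ℤ) (Zloc n)).smulRight (nuG G)) (by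
    rintro z ⟨m, rfl⟩
    simp only [LinearMap.mem_ker, LinearMap.sub_apply, LinearMap.smulRight_apply,
      LinearMap.coe_comp, Function.comp_apply, Finsupp.lapply_apply]
    have h1 : (LinearMap.fst ℤ (G →₀ ℤ) (Zloc n)) (gammaMap G n m)
        = indI (Representation.trivial ℤ (G := G) (V := ℤ)) m := rfl
    rw [h1, indI_triv]
    rw [Finsupp.smul_apply, nuG_one]
    simp)

theorem qMapG_mk (z : (G →₀ ℤ) × Zloc n) :
    qMapG G n (Submodule.Quotient.mk z) = z.1 - (z.1 1) • nuG G := by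
  rw [qMapG, Submodule.liftQ_apply]
  simp [Finsupp.lapply_apply]

/-- The inclusion `ℤ_(n) → Γ_n(ℤ)`. -/
noncomputable def iMapG : Zloc n →ₗ[ℤ] GammaMod G n :=
  (LinearMap.range (gammaMap G n)).mkQ ∘ₗ LinearMap.inr ℤ (G →₀ ℤ) (Zloc n)

theorem iMapG_apply (y : Zloc n) :
    iMapG G n y = Submodule.Quotient.mk ((0 : G →₀ ℤ), y) := rfl

theorem gammaRep_mk (g : G) (x : G →₀ ℤ) (y : Zloc n) :
    gammaRep G n g (Submodule.Quotient.mk (x, y))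
      = Submodule.Quotient.mk (Finsupp.mapDomain (fun a => g * a) x, y) := by
  show Submodule.mapQ _ _ (bigRep G n g) (gammaMap_range_le G n g)
      (Submodule.Quotient.mk (x, y)) = _
  rw [Submodule.mapQ_apply]
  rfl

end GammaAux

/-- for `n > 1`, the `ℤG`-module `Γ_n(ℤ)` is weakly injective
if and only if `G` is trivial. -/
theorem gammaMod_weaklyInjective_iff {G : Type} [Group G] [Fintype G]
    (n : ℤ) (hn : 1 < n) :
    WeaklyInjective (gammaRep G n) ↔ Fintype.card G = 1 := by
  constructor
  · intro h
    classical
    obtain ⟨θ, hθ⟩ := weaklyInjective_higman (gammaRep G n) h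
    -- Step 1: the composite q ∘ θ ∘ i vanishes, since Hom(ℤ_(n), ℤ) = 0.
    have hqθi : ∀ z : Zloc n, qMapG G n (θ (iMapG G n z)) = 0 := by
      intro z
      have hcomp : ∀ g : G,
          (Finsupp.lapply g : (G →₀ ℤ) →ₗ[ℤ] ℤ) ∘ₗ (qMapG G n ∘ₗ θ ∘ₗ iMapG G n) = 0 :=
        fun g => hom_zloc_int hn _
      refine Finsupp.ext fun g => ?_
      have := LinearMap.ext_iff.mp (hcomp g) z
      simpa using this
    -- Step 2: the image of 1 under θ ∘ i.
    obtain ⟨⟨x, y⟩, hw⟩ := Submodule.Quotient.mk_surjective _ (θ (iMapG G n 1))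
    have hx : x = (x 1) • nuG G := by
      have h0 := hqθi 1
      rw [← hw, qMapG_mk] at h0
      exact sub_eq_zero.mp h0
    have hpw : pMapG G n (θ (iMapG G n 1)) = 0 := by
      rw [← hw, pMapG_mk]
      show ((epsG G x : ℤ) : ZMod (Fintype.card G)) = 0
      rw [hx, map_smul, epsG_nuG, smul_eq_mul]
      push_cast
      rw [ZMod.natCast_self]
      ring
    -- Step 3: evaluate the trace identity at the class of (δ₁, 0).
    set z₀ : GammaMod G n :=
      Submodule.Quotient.mk (Finsupp.single (1 : G) (1 : ℤ), (0 : Zloc n)) with hz0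
    have htr := LinearMap.ext_iff.mp hθ z₀
    rw [traceMap, LinearMap.sum_apply] at htr
    have happ := congrArg (pMapG G n) htr
    rw [map_sum] at happ
    have hterm : ∀ g : G,
        pMapG G n ((gammaRep G n g ∘ₗ θ ∘ₗ gammaRep G n g⁻¹) z₀)
          = pMapG G n (θ (Submodule.Quotient.mk (Finsupp.single g⁻¹ (1 : ℤ), (0 : Zloc n)))) := by
      intro g
      simp only [LinearMap.coe_comp, Function.comp_apply]
      rw [hz0, gammaRep_mk, Finsupp.mapDomain_single, mul_one]
      obtain ⟨⟨a, b⟩, ha⟩ := Submodule.Quotient.mk_surjective _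
        (θ (Submodule.Quotient.mk (Finsupp.single g⁻¹ (1 : ℤ), (0 : Zloc n))))
      rw [← ha, gammaRep_mk, pMapG_mk, pMapG_mk]
      simp [epsG_mapDomain]
    rw [Finset.sum_congr rfl (fun g _ => hterm g)] at happ
    have hsum : (∑ g : G,
        pMapG G n (θ (Submodule.Quotient.mk (Finsupp.single g⁻¹ (1 : ℤ), (0 : Zloc n))))) = 0 := by
      rw [← map_sum, ← map_sum]
      have h4 : (∑ g : G, (Submodule.Quotient.mk (Finsupp.single g⁻¹ (1 : ℤ), (0 : Zloc n))
          : GammaMod G n)) = Submodule.Quotient.mk (nuG G, (0 : Zloc n)) := by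
        have h5 : (∑ g : G, ((Finsupp.single g⁻¹ (1 : ℤ), (0 : Zloc n))
            : (G →₀ ℤ) × Zloc n)) = (nuG G, 0) := by
          rw [Prod.ext_iff]
          constructor
          · rw [Prod.fst_sum, nuG]
            exact Fintype.sum_equiv (Equiv.inv G) _ _ (fun g => rfl)
          · simp [Prod.snd_sum]
        simp only [← Submodule.mkQ_apply]
        rw [← map_sum, h5]
      rw [h4]
      have h6 : (Submodule.Quotient.mk (nuG G, (0 : Zloc n)) : GammaMod G n)
          = - iMapG G n 1 := by
        have h7 := mk_gamma_zero G n 1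
        rw [one_smul, map_one] at h7
        have : (nuG G, (0 : Zloc n)) = (nuG G, (1 : Zloc n)) + (0, -1) := by
          simp
        rw [this, Submodule.Quotient.mk_add, h7, zero_add, iMapG_apply]
        rw [show ((0 : G →₀ ℤ), (-1 : Zloc n)) = -((0 : G →₀ ℤ), (1 : Zloc n)) by simp]
        rw [Submodule.Quotient.mk_neg]
      rw [h6, map_neg, map_neg, hpw, neg_zero]
    rw [hsum] at happ
    simp only [LinearMap.id_coe, id_eq] at happ
    rw [pMapG_mk, epsG_single] at happ
    have h9 : ((1 : ℕ) : ZMod (Fintype.card G)) = 0 := by exact_mod_cast happ.symm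
    exact Nat.dvd_one.mp ((ZMod.natCast_eq_zero_iff 1 (Fintype.card G)).mp h9)
  · intro hc
    intro L M _ _ _ _ ρL ρM ι hι hsplit f hf
    obtain ⟨r, hr⟩ := hsplit
    have hone : ∀ g : G, g = 1 := by
      intro g
      obtain ⟨x, hx⟩ := Fintype.card_eq_one_iff.mp hc
      rw [hx g, hx 1]
    refine ⟨f ∘ₗ r, ?_, ?_⟩
    · intro g
      rw [hone g, map_one, map_one]
      ext v
      simp
    · rw [LinearMap.comp_assoc, hr, LinearMap.comp_id]
end

section
/- Let p be a prime dividing the order of a finite group G, and n ≥ 1. Then the canonical surjection ε : ℤ/p^{n+1} → ℤ/p^n of ℤG-modules (trivial G-action) is not an isomorphism in the stable module category stmod(ℤG); concretely, there is no ℤG-map σ : ℤ/p^n → ℤ/p^{n+1} such that id − εσ factors through the induced module (ℤ/p^n)G → ℤ/p^n. -/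
open Finset

universe u

/-- if `p` divides `|G|`, the canonical surjection
`ε : ℤ/p^(n+1) → ℤ/p^n` is not an isomorphism in the stable module category: there is
no `ℤG`-map `σ : ℤ/p^n → ℤ/p^(n+1)` such that `id − ε∘σ` factors through the natural
surjection `(ℤ/p^n)G → ℤ/p^n` via a `ℤG`-map `κ`. -/
theorem not_stably_iso_zmod_pow
    {G : Type} [Group G] [Fintype G] (p : ℕ) (hp : p.Prime)
    (hdvd : p ∣ Fintype.card G) (n : ℕ) (hn : 1 ≤ n) :
    ¬ ∃ (σ : ZMod (p ^ n) →ₗ[ℤ] ZMod (p ^ (n + 1)))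
        (κ : ZMod (p ^ n) →ₗ[ℤ] (G →₀ ZMod (p ^ n))),
        IsGEquiv (Representation.trivial ℤ (G := G) (V := ZMod (p ^ n)))
          (ind ℤ G (ZMod (p ^ n))) κ ∧
        (indP (Representation.trivial ℤ (G := G) (V := ZMod (p ^ n)))) ∘ₗ κ =
          LinearMap.id -
            ((ZMod.castHom (pow_dvd_pow p (Nat.le_succ n))
              (ZMod (p ^ n))).toAddMonoidHom.toIntLinearMap ∘ₗ σ) := by
  rintro ⟨σ, κ, hκ, heq⟩
  haveI := Fact.mk hp
  haveI : NeZero (p ^ (n + 1)) := ⟨pow_ne_zero _ hp.ne_zero⟩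
  haveI : NeZero (p ^ n) := ⟨pow_ne_zero _ hp.ne_zero⟩
  -- κ 1 is a constant function
  have hconst : ∀ g : G, (κ 1) g = (κ 1) 1 := by
    intro g
    have h := LinearMap.congr_fun (hκ g) (1 : ZMod (p ^ n))
    simp only [LinearMap.comp_apply, Representation.trivial_apply] at h
    have h2 : κ 1 = Finsupp.mapDomain (fun x => g * x) (κ 1) := h
    have h3 := Finsupp.mapDomain_apply (mul_right_injective g) (κ 1) 1
    simp only [mul_one] at h3
    rw [← h2] at h3
    exact h3
  -- compute indP (κ 1)
  have hindP : indP (Representation.trivial ℤ (G := G) (V := ZMod (p ^ n))) (κ 1)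
      = (Fintype.card G) • (κ 1) 1 := by
    rw [indP, Finsupp.lsum_apply]
    rw [Finsupp.sum_fintype _ _ (fun g => by simp)]
    simp only [Representation.trivial_apply]
    simp [hconst, Finset.card_univ]
  -- σ 1 is divisible by p
  have hb0 : (p : ZMod (p ^ (n + 1))) ^ n * σ 1 = 0 := by
    have h1 : ((p ^ n : ℤ) • (1 : ZMod (p ^ n))) = 0 := by
      rw [zsmul_eq_mul, mul_one]
      exact_mod_cast ZMod.natCast_self (p ^ n)
    calc (p : ZMod (p ^ (n + 1))) ^ n * σ 1 = (p ^ n : ℤ) • σ 1 := by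
          rw [zsmul_eq_mul]; push_cast; ring
    _ = σ ((p ^ n : ℤ) • 1) := by rw [map_smul]
    _ = 0 := by rw [h1, map_zero]
  have hpval : p ∣ (σ 1).val := by
    have h2 : ((p ^ n * (σ 1).val : ℕ) : ZMod (p ^ (n + 1))) = 0 := by
      push_cast
      rw [ZMod.natCast_val, ZMod.cast_id]
      exact hb0
    have h3 : p ^ (n + 1) ∣ p ^ n * (σ 1).val :=
      (ZMod.natCast_eq_zero_iff _ _).mp h2
    have h4 : p ^ n * p ∣ p ^ n * (σ 1).val := by rw [← pow_succ]; exact h3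
    exact (Nat.mul_dvd_mul_iff_left (pow_pos hp.pos n)).mp h4
  -- project everything to ZMod p
  have hn' : n ≠ 0 := by omega
  set φ : ZMod (p ^ n) →+* ZMod p := ZMod.castHom (dvd_pow_self p hn') (ZMod p) with hφ
  have hmain := congrArg φ (LinearMap.congr_fun heq (1 : ZMod (p ^ n)))
  simp only [LinearMap.comp_apply, LinearMap.sub_apply, LinearMap.id_apply, map_sub] at hmain
  rw [hindP] at hmain
  have hlhs : φ ((Fintype.card G) • (κ 1) 1) = 0 := by
    rw [map_nsmul, nsmul_eq_mul]
    have : ((Fintype.card G : ℕ) : ZMod p) = 0 :=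
      (ZMod.natCast_eq_zero_iff _ _).mpr hdvd
    rw [this, zero_mul]
  have hrhs : φ ((ZMod.castHom (pow_dvd_pow p (Nat.le_succ n))
      (ZMod (p ^ n))).toAddMonoidHom.toIntLinearMap (σ 1)) = 0 := by
    show φ ((ZMod.castHom (pow_dvd_pow p (Nat.le_succ n)) (ZMod (p ^ n))) (σ 1)) = 0
    rw [hφ, ← RingHom.comp_apply, ZMod.castHom_comp, ZMod.castHom_apply,
      ← ZMod.natCast_val]
    exact (ZMod.natCast_eq_zero_iff _ _).mpr hpval
  rw [hlhs, hrhs, sub_zero, map_one] at hmain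
  exact one_ne_zero hmain.symm
end
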